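/- Let φ be a convex C¹ function on (a,b) ⊆ ℝ with ψ(s) := s·φ'(s) − φ(s), and let R_a := lim_{s→a⁺} ψ(s), R_b := lim_{s→b⁻} ψ(s). Then for any R ∈ (R_a, R_b) there exists ŝ ∈ (a,b) with ψ(ŝ) = R and sup_{s∈(a,b)} ((s−1)R − φ(s))/s = ((ŝ−1)R − φ(ŝ))/ŝ. -/

import Mathlib

/-- Let φ be a convex C¹ function on (a,b) ⊆ ℝ (0 < a < b) with ψ(s) := s·φ'(s) − φ(s),
and let R_a := lim_{s→a⁺} ψ(s), R_b := lim_{s→b⁻} ψ(s). Then for any R ∈ (R_a, R_b)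
there exists ŝ ∈ (a,b) with ψ(ŝ) = R and
sup_{s∈(a,b)} ((s−1)R − φ(s))/s = ((ŝ−1)R − φ(ŝ))/ŝ, the supremum being attained at ŝ. -/
theorem sup_attained (a b : ℝ) (ha : 0 < a) (hab : a < b) (φ : ℝ → ℝ)
    (hconv : ConvexOn ℝ (Set.Ioo a b) φ)
    (hdiff : ∀ s ∈ Set.Ioo a b, DifferentiableAt ℝ φ s)
    (hcont : ContinuousOn (deriv φ) (Set.Ioo a b))
    (Ra Rb : ℝ)
    (hRa : Filter.Tendsto (fun s => s * deriv φ s - φ s) (nhdsWithin a (Set.Ioi a)) (nhds Ra))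
    (hRb : Filter.Tendsto (fun s => s * deriv φ s - φ s) (nhdsWithin b (Set.Iio b)) (nhds Rb))
    (R : ℝ) (hR : R ∈ Set.Ioo Ra Rb) :
    ∃ sh ∈ Set.Ioo a b, sh * deriv φ sh - φ sh = R ∧
      IsGreatest ((fun s => ((s - 1) * R - φ s) / s) '' Set.Ioo a b)
        (((sh - 1) * R - φ sh) / sh) := by
  set ψ : ℝ → ℝ := fun s => s * deriv φ s - φ s with hψ
  have hφcont : ContinuousOn φ (Set.Ioo a b) := fun s hs =>
    ((hdiff s hs).continuousAt).continuousWithinAt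
  have hψcont : ContinuousOn ψ (Set.Ioo a b) :=
    (continuousOn_id.mul hcont).sub hφcont
  -- find s1 near a with ψ s1 < R
  set m := (a + b) / 2 with hm
  have ham : a < m := by simp [hm]; linarith
  have hmb : m < b := by simp [hm]; linarith
  have h1 : ∃ s1 ∈ Set.Ioo a m, ψ s1 < R := by
    have h := hRa.eventually (Filter.Tendsto.eventually_lt_const hR.1 Filter.tendsto_id)
    have h2 : Set.Ioo a m ∈ nhdsWithin a (Set.Ioi a) := Ioo_mem_nhdsGT_of_mem ⟨le_refl a, ham⟩
    rcases (h.and (Filter.eventually_of_mem h2 (fun x hx => hx))).exists with ⟨s1, hs1, hs1'⟩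
    exact ⟨s1, hs1', hs1⟩
  have h2 : ∃ s2 ∈ Set.Ioo m b, R < ψ s2 := by
    have h := hRb.eventually (Filter.Tendsto.eventually_const_lt hR.2 Filter.tendsto_id)
    have h2 : Set.Ioo m b ∈ nhdsWithin b (Set.Iio b) := Ioo_mem_nhdsLT_of_mem ⟨hmb, le_refl b⟩
    rcases (h.and (Filter.eventually_of_mem h2 (fun x hx => hx))).exists with ⟨s2, hs2, hs2'⟩
    exact ⟨s2, hs2', hs2⟩
  obtain ⟨s1, hs1, hψ1⟩ := h1
  obtain ⟨s2, hs2, hψ2⟩ := h2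
  have hs12 : s1 < s2 := lt_trans hs1.2 hs2.1
  have hsub : Set.Icc s1 s2 ⊆ Set.Ioo a b := fun x hx =>
    ⟨lt_of_lt_of_le hs1.1 hx.1, lt_of_le_of_lt hx.2 hs2.2⟩
  have hIVT := intermediate_value_Icc hs12.le (hψcont.mono hsub)
  obtain ⟨sh, hshmem, hsheq⟩ := hIVT ⟨hψ1.le, hψ2.le⟩
  have hsh : sh ∈ Set.Ioo a b := hsub hshmem
  have hshpos : 0 < sh := lt_trans ha hsh.1
  refine ⟨sh, hsh, hsheq, ⟨⟨sh, hsh, rfl⟩, ?_⟩⟩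
  rintro y ⟨s, hs, rfl⟩
  have hspos : 0 < s := lt_trans ha hs.1
  -- tangent line inequality: φ sh + deriv φ sh * (s - sh) ≤ φ s
  have htang : φ sh + deriv φ sh * (s - sh) ≤ φ s := by
    rcases lt_trichotomy s sh with h | h | h
    · have := hconv.slope_le_deriv hs hsh h (hdiff sh hsh)
      rw [slope_def_field] at this
      have hd : 0 < sh - s := by linarith
      rw [div_le_iff₀ hd] at this
      nlinarith
    · simp [h]
    · have := hconv.deriv_le_slope hsh hs h (hdiff sh hsh)
      rw [slope_def_field] at this
      have hd : 0 < s - sh := by linarith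
      rw [le_div_iff₀ hd] at this
      nlinarith
  -- conclude: f s ≤ f sh
  rw [div_le_div_iff₀ hspos hshpos]
  have hReq : R = sh * deriv φ sh - φ sh := hsheq.symm
  nlinarith [mul_le_mul_of_nonneg_left htang hshpos.le]
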